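/- Let ξ and B be n×n Hermitian complex matrices. Then the following are equivalent: (1) there exists an n×n complex matrix v with B = v·ξ + ξ·vᴴ; (2) ⟨Bx, y⟩ = 0 for all x, y ∈ ℂⁿ with ξx = 0 and ξy = 0. In other words, the tangent space at ξ to the orbit of ξ under the GL(n,ℂ)-action (T, ξ) ↦ TξTᴴ consists exactly of the Hermitian matrices vanishing on the kernel of ξ. -/

import Mathlib

open scoped Matrix
open Matrix

private lemma alg_aux {n : ℕ} (ξ p P B Q : Matrix (Fin n) (Fin n) ℂ)
    (h1 : ξ * p = P) (h2 : p * ξ = P) (hQ : Q = 1 - P) (hQBQ : Q * B * Q = 0) :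
    (B * p - (1/2 : ℂ) • (ξ * p * B * p)) * ξ
      + ξ * (p * B - (1/2 : ℂ) • (p * B * p * ξ)) = B := by
  have e1 : B * p * ξ = B * P := by rw [Matrix.mul_assoc, h2]
  have e2 : ξ * p * B * p * ξ = P * B * P := by
    rw [h1, Matrix.mul_assoc (P * B), h2]
  have e3 : ξ * (p * B) = P * B := by rw [← Matrix.mul_assoc, h1]
  have e4 : ξ * (p * B * p * ξ) = P * B * P := by
    calc ξ * (p * B * p * ξ) = (ξ * p) * (B * (p * ξ)) := by
          simp only [Matrix.mul_assoc]
      _ = P * B * P := by rw [h1, h2, Matrix.mul_assoc]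
  rw [Matrix.sub_mul, Matrix.mul_sub, Matrix.smul_mul, Matrix.mul_smul, e1, e2, e3, e4]
  have h0 : B - B * P - P * B + P * B * P = 0 := by
    calc B - B * P - P * B + P * B * P = (1 - P) * B * (1 - P) := by
          simp only [Matrix.sub_mul, Matrix.mul_sub, Matrix.one_mul, Matrix.mul_one]
          abel
      _ = 0 := by rw [← hQ, hQBQ]
  have h3 : B * P + P * B - P * B * P = B := by
    have h4 : B * P + P * B - P * B * P - B = -(B - B * P - P * B + P * B * P) := by abel
    rw [h0, neg_zero] at h4
    exact sub_eq_zero.mp h4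
  calc B * P - (1/2 : ℂ) • (P * B * P) + (P * B - (1/2 : ℂ) • (P * B * P))
      = B * P + P * B - P * B * P := by module
    _ = B := h3

/-- For Hermitian matrices `ξ`, `B`: `B` is of the form `v·ξ + ξ·vᴴ` (i.e. `B` is
tangent at `ξ` to the `GL(n,ℂ)`-orbit of the action `(T,ξ) ↦ TξTᴴ`) if and only if
`⟨Bx, y⟩ = 0` for all `x, y` in the kernel of `ξ`. -/
theorem tangent_to_GL_orbit_iff {n : ℕ} (ξ B : Matrix (Fin n) (Fin n) ℂ)
    (hξ : ξ.IsHermitian) (hB : B.IsHermitian) :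
    (∃ v : Matrix (Fin n) (Fin n) ℂ, B = v * ξ + ξ * vᴴ) ↔
      ∀ x y : Fin n → ℂ, ξ *ᵥ x = 0 → ξ *ᵥ y = 0 → star (B *ᵥ x) ⬝ᵥ y = 0 := by
  constructor
  · rintro ⟨v, rfl⟩ x y hx hy
    rw [add_mulVec, ← mulVec_mulVec, ← mulVec_mulVec, hx, mulVec_zero, zero_add]
    rw [star_mulVec, hξ.eq, ← dotProduct_mulVec, hy, dotProduct_zero]
  · intro h
    set U : Matrix (Fin n) (Fin n) ℂ := (hξ.eigenvectorUnitary : Matrix (Fin n) (Fin n) ℂ)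
      with hUdef
    set d : Fin n → ℂ := fun i => (hξ.eigenvalues i : ℂ) with hd
    have hU2 : Uᴴ * U = 1 := by
      simpa [hUdef, Matrix.star_eq_conjTranspose] using
        (Matrix.mem_unitaryGroup_iff').mp hξ.eigenvectorUnitary.2
    have cancel : ∀ X : Matrix (Fin n) (Fin n) ℂ, Uᴴ * (U * X) = X := fun X => by
      rw [← Matrix.mul_assoc, hU2, Matrix.one_mul]
    set Dg : (Fin n → ℂ) → Matrix (Fin n) (Fin n) ℂ :=
      fun e => U * diagonal e * Uᴴ with hDg
    have mulDg : ∀ e f : Fin n → ℂ, Dg e * Dg f = Dg (fun i => e i * f i) := by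
      intro e f
      simp only [hDg, Matrix.mul_assoc]
      rw [cancel, ← Matrix.mul_assoc (diagonal e), diagonal_mul_diagonal]
    have hspec : ξ = Dg d := hξ.spectral_theorem
    have hdreal : ∀ i, star (d i) = d i := fun i => by
      simp [hd, Complex.star_def, Complex.conj_ofReal]
    have DgH : ∀ e : Fin n → ℂ, (∀ i, star (e i) = e i) → (Dg e)ᴴ = Dg e := by
      intro e he
      simp only [hDg, conjTranspose_mul, conjTranspose_conjTranspose, diagonal_conjTranspose,
        ← Matrix.mul_assoc]
      congr 2
      exact congrArg diagonal (funext he)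
    set p : Matrix (Fin n) (Fin n) ℂ := Dg (fun i => (d i)⁻¹) with hp
    set P : Matrix (Fin n) (Fin n) ℂ := Dg (fun i => d i * (d i)⁻¹) with hPdef
    have h1 : ξ * p = P := by rw [hspec, hp, mulDg]
    have h2 : p * ξ = P := by
      rw [hspec, hp, mulDg, hPdef]
      exact congrArg Dg (funext fun i => mul_comm _ _)
    have hξP : ξ * P = ξ := by
      rw [hspec, hPdef, mulDg]
      refine congrArg Dg (funext fun i => ?_)
      rcases eq_or_ne (d i) 0 with h0 | h0
      · simp [h0]
      · field_simp
    have hpH : pᴴ = p := by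
      refine DgH _ fun i => ?_
      rw [star_inv₀, hdreal i]
    have hPH : Pᴴ = P := by
      refine DgH _ fun i => ?_
      rw [star_mul', star_inv₀, hdreal i, mul_comm]
    set Q : Matrix (Fin n) (Fin n) ℂ := 1 - P with hQ
    have hξQ : ξ * Q = 0 := by rw [hQ, Matrix.mul_sub, Matrix.mul_one, hξP, sub_self]
    have hQH : Qᴴ = Q := by rw [hQ, conjTranspose_sub, conjTranspose_one, hPH]
    have hQBQ : Q * B * Q = 0 := by
      ext i j
      have key := h (Q *ᵥ Pi.single i 1) (Q *ᵥ Pi.single j 1)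
        (by rw [mulVec_mulVec, hξQ, zero_mulVec])
        (by rw [mulVec_mulVec, hξQ, zero_mulVec])
      rw [star_mulVec, star_mulVec, vecMul_vecMul, dotProduct_mulVec, vecMul_vecMul,
        hQH, hB.eq] at key
      simpa [vecMul, dotProduct, Pi.single_apply, Finset.sum_ite_eq, Finset.sum_ite_eq',
        mul_comm] using key
    exact ⟨B * p - (1/2 : ℂ) • (ξ * p * B * p), by
      have hvH : (B * p - (1/2 : ℂ) • (ξ * p * B * p))ᴴ
          = p * B - (1/2 : ℂ) • (p * B * p * ξ) := by
        have hc : star ((1:ℂ)/2) = (1:ℂ)/2 := by norm_num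
        simp only [conjTranspose_sub, conjTranspose_smul, conjTranspose_mul, hpH, hB.eq,
          hξ.eq, hc]
        simp only [Matrix.mul_assoc]
      rw [hvH, alg_aux ξ p P B Q h1 h2 hQ hQBQ]⟩
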